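/- Let f : ℝ^{m×n} → ℝ be differentiable with β-Lipschitz gradient (β-smooth) and suppose f(W^(1)) − inf f ≤ M. Fix Q ∈ ℝ^{m×r} with orthonormal columns and for t = 1, …, T set Ĝ^(t) = Qᵀ∇f(W^(t)), let O^(t) ∈ ℝ^{r×n} satisfy ‖O^(t)‖_F² ≤ n, and update W^(t+1) = W^(t) − η Q O^(t) with constant step size η > 0. Assume at each step (i) −⟨Ĝ^(t), O^(t)⟩_F ≤ −¼‖Ĝ^(t)‖_F² + (5/2)‖Ĝ^(t) − M^(t)‖_F for the low-rank momentum M^(t), and (ii) ‖Ĝ^(t) − M^(t)‖_F ≤ σ/√m. Then (1/T) Σ_{t=1}^{T} ‖Ĝ^(t)‖_F² ≤ 4M/(ηT) + 10σ/√m + 2ηβn. -/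

import Mathlib

open Matrix Finset

/-- Frobenius inner product `⟨A,B⟩_F = tr(AᵀB)`. -/
noncomputable def frobInner {n m : ℕ} (A B : Matrix (Fin n) (Fin m) ℝ) : ℝ :=
  (Aᵀ * B).trace

/-- Frobenius norm. -/
noncomputable def frobNorm {n m : ℕ} (A : Matrix (Fin n) (Fin m) ℝ) : ℝ :=
  Real.sqrt (frobInner A A)

namespace SumoAux

lemma frobInner_eq_sum {n m : ℕ} (A B : Matrix (Fin n) (Fin m) ℝ) :
    frobInner A B = ∑ p : Fin m × Fin n, A p.2 p.1 * B p.2 p.1 := by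
  rw [frobInner, Matrix.trace]
  simp only [Matrix.diag, Matrix.mul_apply, Matrix.transpose_apply]
  rw [← Finset.sum_product']
  rfl

lemma frobInner_self_nonneg {n m : ℕ} (A : Matrix (Fin n) (Fin m) ℝ) :
    0 ≤ frobInner A A := by
  rw [frobInner_eq_sum]
  exact Finset.sum_nonneg fun p _ => mul_self_nonneg _

lemma frobNorm_sq {n m : ℕ} (A : Matrix (Fin n) (Fin m) ℝ) :
    frobNorm A ^ 2 = frobInner A A :=
  Real.sq_sqrt (frobInner_self_nonneg A)

lemma frobNorm_nonneg {n m : ℕ} (A : Matrix (Fin n) (Fin m) ℝ) : 0 ≤ frobNorm A :=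
  Real.sqrt_nonneg _

lemma frobInner_smul_right {n m : ℕ} (A B : Matrix (Fin n) (Fin m) ℝ) (c : ℝ) :
    frobInner A (c • B) = c * frobInner A B := by
  simp only [frobInner_eq_sum, Matrix.smul_apply, smul_eq_mul, Finset.mul_sum]
  exact Finset.sum_congr rfl fun p _ => by ring

lemma frobInner_sub_left {n m : ℕ} (A B C : Matrix (Fin n) (Fin m) ℝ) :
    frobInner (A - B) C = frobInner A C - frobInner B C := by
  simp [frobInner_eq_sum, sub_mul, Finset.sum_sub_distrib]

lemma frobInner_le {n m : ℕ} (A B : Matrix (Fin n) (Fin m) ℝ) :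
    frobInner A B ≤ frobNorm A * frobNorm B := by
  rw [frobInner_eq_sum, frobNorm, frobNorm, frobInner_eq_sum, frobInner_eq_sum]
  simpa [pow_two] using Real.sum_mul_le_sqrt_mul_sqrt Finset.univ
    (fun p : Fin m × Fin n => A p.2 p.1) (fun p => B p.2 p.1)

lemma frobNorm_smul {n m : ℕ} (c : ℝ) (A : Matrix (Fin n) (Fin m) ℝ) :
    frobNorm (c • A) = |c| * frobNorm A := by
  rw [frobNorm, frobNorm, frobInner_smul_right, frobInner]
  have : (c • A)ᵀ * A = c • (Aᵀ * A) := by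
    rw [Matrix.transpose_smul, Matrix.smul_mul]
  rw [show ((c • A)ᵀ * A).trace = c * (Aᵀ * A).trace by rw [this, Matrix.trace_smul]; simp]
  rw [← mul_assoc, show c * c = c ^ 2 by ring, Real.sqrt_mul (sq_nonneg c), Real.sqrt_sq_eq_abs]
  rfl

end SumoAux

namespace SumoAux

lemma hasDerivAt_line {m n : ℕ} (f : Matrix (Fin m) (Fin n) ℝ → ℝ)
    (gradf : Matrix (Fin m) (Fin n) ℝ → Matrix (Fin m) (Fin n) ℝ)
    (hgrad : ∀ W V : Matrix (Fin m) (Fin n) ℝ,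
      HasDerivAt (fun s : ℝ => f (W + s • V)) (frobInner (gradf W) V) 0)
    (X V : Matrix (Fin m) (Fin n) ℝ) (s₀ : ℝ) :
    HasDerivAt (fun s => f (X + s • V)) (frobInner (gradf (X + s₀ • V)) V) s₀ := by
  have h := hgrad (X + s₀ • V) V
  have hc : HasDerivAt (fun s : ℝ => s - s₀) 1 s₀ := (hasDerivAt_id s₀).sub_const s₀
  have h2 := HasDerivAt.scomp (𝕜 := ℝ) s₀ (by simpa using h) hc
  simp only [Function.comp, smul_eq_mul, mul_one, one_smul] at h2
  have heq : (fun s : ℝ => f (X + s • V)) =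
      (fun s : ℝ => f ((X + s₀ • V) + (s - s₀) • V)) := by
    funext s
    congr 1
    rw [sub_smul]
    abel
  rw [heq]
  rw [one_mul] at h2
  exact h2

lemma descent {m n : ℕ} (f : Matrix (Fin m) (Fin n) ℝ → ℝ)
    (gradf : Matrix (Fin m) (Fin n) ℝ → Matrix (Fin m) (Fin n) ℝ)
    (hgrad : ∀ W V : Matrix (Fin m) (Fin n) ℝ,
      HasDerivAt (fun s : ℝ => f (W + s • V)) (frobInner (gradf W) V) 0)
    (β : ℝ) (hβ : 0 ≤ β)
    (hsmooth : ∀ X Y : Matrix (Fin m) (Fin n) ℝ,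
      frobNorm (gradf X - gradf Y) ≤ β * frobNorm (X - Y))
    (X V : Matrix (Fin m) (Fin n) ℝ) :
    f (X + V) ≤ f X + frobInner (gradf X) V + β / 2 * frobNorm V ^ 2 := by
  set c := frobInner (gradf X) V with hc
  set K := frobNorm V ^ 2 with hK
  set φ : ℝ → ℝ := fun s => f (X + s • V) - s * c - β / 2 * K * s ^ 2 with hφ
  have hφ' : ∀ s : ℝ, HasDerivAt φ
      (frobInner (gradf (X + s • V)) V - c - β * K * s) s := by
    intro s
    have h1 := hasDerivAt_line f gradf hgrad X V s
    have h2 : HasDerivAt (fun s : ℝ => s * c) c s := hasDerivAt_mul_const c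
    have h3 : HasDerivAt (fun s : ℝ => β / 2 * K * s ^ 2) (β * K * s) s := by
      have := (hasDerivAt_pow 2 s).const_mul (β / 2 * K)
      refine this.congr_deriv ?_
      push_cast
      ring
    exact (h1.sub h2).sub h3
  have hmono : AntitoneOn φ (Set.Icc 0 1) := by
    apply antitoneOn_of_deriv_nonpos (convex_Icc 0 1)
    · exact fun s _ => (hφ' s).continuousAt.continuousWithinAt
    · intro s _
      exact (hφ' s).differentiableAt.differentiableWithinAt
    · intro s hs
      rw [interior_Icc] at hs
      rw [(hφ' s).deriv]
      have hdiff : frobInner (gradf (X + s • V)) V - c =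
          frobInner (gradf (X + s • V) - gradf X) V := by
        rw [frobInner_sub_left]
      have hcs : frobInner (gradf (X + s • V) - gradf X) V ≤
          frobNorm (gradf (X + s • V) - gradf X) * frobNorm V := frobInner_le _ _
      have hsm := hsmooth (X + s • V) X
      have hXV : X + s • V - X = s • V := by abel
      rw [hXV, frobNorm_smul, abs_of_pos hs.1] at hsm
      have hVn := frobNorm_nonneg V
      have hK' : β * K * s = β * (s * frobNorm V) * frobNorm V := by rw [hK]; ring
      have := mul_le_mul_of_nonneg_right hsm hVn
      linarith
  have h01 := hmono (Set.left_mem_Icc.2 zero_le_one) (Set.right_mem_Icc.2 zero_le_one)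
    zero_le_one
  simp only [hφ] at h01
  simp only [zero_smul, add_zero, one_smul, one_pow, mul_one, mul_zero, zero_pow,
    sub_zero, ne_eq, OfNat.ofNat_ne_zero, not_false_eq_true] at h01
  linarith

end SumoAux

namespace SumoAux

lemma frobInner_mul_left {m n r : ℕ} (A : Matrix (Fin m) (Fin n) ℝ)
    (Q : Matrix (Fin m) (Fin r) ℝ) (B : Matrix (Fin r) (Fin n) ℝ) :
    frobInner A (Q * B) = frobInner (Qᵀ * A) B := by
  simp [frobInner, Matrix.transpose_mul, Matrix.transpose_transpose, Matrix.mul_assoc]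

lemma frobNorm_orth {m n r : ℕ} (Q : Matrix (Fin m) (Fin r) ℝ) (hQ : Qᵀ * Q = 1)
    (B : Matrix (Fin r) (Fin n) ℝ) : frobNorm (Q * B) = frobNorm B := by
  unfold frobNorm frobInner
  congr 1
  rw [Matrix.transpose_mul, Matrix.mul_assoc, ← Matrix.mul_assoc Qᵀ Q B, hQ, Matrix.one_mul]

end SumoAux

open SumoAux in
/-- **Averaged bound for SUMO's inner fixed low-rank optimization.**
Under β-smoothness, `f(W^(1)) − inf f ≤ M` (encoded as `∀ X, f(W^(1)) − f(X) ≤ M`),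
a fixed column-orthonormal `Q`, updates `W^(t+1) = W^(t) − ηQO^(t)` with `‖O^(t)‖_F² ≤ n`,
alignment inequalities, and `‖Ĝ^(t) − M^(t)‖_F ≤ σ/√m`, the averaged squared projected
gradient norm satisfies `(1/T)Σ ‖Ĝ^(t)‖² ≤ 4M/(ηT) + 10σ/√m + 2ηβn`. -/
theorem sumo_inner_convergence
    {m n r : ℕ}
    (f : Matrix (Fin m) (Fin n) ℝ → ℝ)
    (gradf : Matrix (Fin m) (Fin n) ℝ → Matrix (Fin m) (Fin n) ℝ)
    (hgrad : ∀ W V : Matrix (Fin m) (Fin n) ℝ,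
      HasDerivAt (fun s : ℝ => f (W + s • V)) (frobInner (gradf W) V) 0)
    (β : ℝ) (hβ : 0 ≤ β)
    (hsmooth : ∀ X Y : Matrix (Fin m) (Fin n) ℝ,
      frobNorm (gradf X - gradf Y) ≤ β * frobNorm (X - Y))
    (Q : Matrix (Fin m) (Fin r) ℝ) (hQ : Qᵀ * Q = 1)
    (T : ℕ) (hT : 1 ≤ T)
    (W : ℕ → Matrix (Fin m) (Fin n) ℝ)
    (Ghat M' O : ℕ → Matrix (Fin r) (Fin n) ℝ)
    (Mb : ℝ) (hMb : ∀ X, f (W 1) - f X ≤ Mb)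
    (hGhat : ∀ t ∈ Finset.Icc 1 T, Ghat t = Qᵀ * gradf (W t))
    (hO : ∀ t ∈ Finset.Icc 1 T, frobNorm (O t) ^ 2 ≤ n)
    (η σ : ℝ) (hη : 0 < η) (hσ : 0 ≤ σ)
    (hupdate : ∀ t ∈ Finset.Icc 1 T, W (t + 1) = W t - η • (Q * O t))
    (halign : ∀ t ∈ Finset.Icc 1 T,
      -(frobInner (Ghat t) (O t)) ≤
        -(1 / 4) * frobNorm (Ghat t) ^ 2 + (5 / 2) * frobNorm (Ghat t - M' t))
    (hnoise : ∀ t ∈ Finset.Icc 1 T, frobNorm (Ghat t - M' t) ≤ σ / Real.sqrt m) :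
    (1 / (T : ℝ)) * ∑ t ∈ Finset.Icc 1 T, frobNorm (Ghat t) ^ 2 ≤
      4 * Mb / (η * T) + 10 * σ / Real.sqrt m + 2 * η * β * n := by
  set ε := σ / Real.sqrt m with hε
  have hε0 : 0 ≤ ε := by positivity
  set C := 5 / 2 * η * ε + β / 2 * η ^ 2 * n with hC
  -- per-step descent
  have step : ∀ t ∈ Finset.Icc 1 T,
      f (W (t + 1)) - f (W t) ≤ -(η / 4) * frobNorm (Ghat t) ^ 2 + C := by
    intro t ht
    have hup := hupdate t ht
    have hWt1 : W (t + 1) = W t + (-η) • (Q * O t) := by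
      rw [hup, sub_eq_add_neg, neg_smul]
    have hd := descent f gradf hgrad β hβ hsmooth (W t) ((-η) • (Q * O t))
    rw [← hWt1] at hd
    have hinner : frobInner (gradf (W t)) ((-η) • (Q * O t)) =
        (-η) * frobInner (Ghat t) (O t) := by
      rw [frobInner_smul_right, frobInner_mul_left, ← hGhat t ht]
    have hnrm : frobNorm ((-η) • (Q * O t)) ^ 2 = η ^ 2 * frobNorm (O t) ^ 2 := by
      rw [frobNorm_smul, frobNorm_orth Q hQ, abs_neg, abs_of_pos hη]
      ring
    rw [hinner, hnrm] at hd
    have ha := halign t ht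
    have hn := hnoise t ht
    have hOt := hO t ht
    have h1 : (-η) * frobInner (Ghat t) (O t) = η * (-(frobInner (Ghat t) (O t))) := by ring
    have h2 : -(frobInner (Ghat t) (O t)) ≤
        -(1 / 4) * frobNorm (Ghat t) ^ 2 + 5 / 2 * ε := by
      calc -(frobInner (Ghat t) (O t)) ≤
          -(1 / 4) * frobNorm (Ghat t) ^ 2 + 5 / 2 * frobNorm (Ghat t - M' t) := ha
        _ ≤ _ := by linarith
    have h3 : η * (-(frobInner (Ghat t) (O t))) ≤
        η * (-(1 / 4) * frobNorm (Ghat t) ^ 2 + 5 / 2 * ε) :=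
      mul_le_mul_of_nonneg_left h2 hη.le
    have h4 : β / 2 * (η ^ 2 * frobNorm (O t) ^ 2) ≤ β / 2 * η ^ 2 * n := by
      rw [← mul_assoc]
      exact mul_le_mul_of_nonneg_left hOt (by positivity)
    rw [h1] at hd
    rw [hC]
    nlinarith [hd, h3, h4]
  -- telescoping
  set S := ∑ t ∈ Finset.Icc 1 T, frobNorm (Ghat t) ^ 2 with hS
  have htel : f (W (T + 1)) - f (W 1) =
      ∑ t ∈ Finset.Icc 1 T, (f (W (t + 1)) - f (W t)) := by
    rw [← Finset.Ico_add_one_right_eq_Icc, Finset.sum_Ico_eq_sum_range, Nat.add_sub_cancel]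
    rw [show (∑ i ∈ Finset.range T, (f (W (1 + i + 1)) - f (W (1 + i)))) =
        ∑ i ∈ Finset.range T, ((fun j => f (W (j + 1))) (i + 1) -
          (fun j => f (W (j + 1))) i) from by
      apply Finset.sum_congr rfl; intro i _; simp [add_comm 1 i]]
    rw [Finset.sum_range_sub (fun j => f (W (j + 1))) T]
  have hsum : ∑ t ∈ Finset.Icc 1 T, (f (W (t + 1)) - f (W t)) ≤
      -(η / 4) * S + T * C := by
    calc ∑ t ∈ Finset.Icc 1 T, (f (W (t + 1)) - f (W t))
        ≤ ∑ t ∈ Finset.Icc 1 T, (-(η / 4) * frobNorm (Ghat t) ^ 2 + C) :=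
          Finset.sum_le_sum step
      _ = -(η / 4) * S + T * C := by
          rw [Finset.sum_add_distrib, ← Finset.mul_sum, Finset.sum_const, Nat.card_Icc,
            Nat.add_sub_cancel, nsmul_eq_mul, ← hS]
  have hM := hMb (W (T + 1))
  have hkey : η / 4 * S ≤ Mb + T * C := by linarith [htel ▸ hsum]
  have hT0 : (0:ℝ) < T := by exact_mod_cast Nat.lt_of_lt_of_le Nat.zero_lt_one hT
  have hSb : S ≤ 4 * Mb / η + T * (10 * ε + 2 * η * β * n) := by
    have h4 : (0:ℝ) < 4 / η := by positivity
    have := mul_le_mul_of_nonneg_left hkey h4.le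
    have hl : 4 / η * (η / 4 * S) = S := by field_simp
    rw [hl] at this
    calc S ≤ 4 / η * (Mb + T * C) := this
      _ = 4 * Mb / η + T * (10 * ε + 2 * η * β * n) := by
          rw [hC]; field_simp; ring
  calc (1 / (T:ℝ)) * S ≤ (1 / (T:ℝ)) * (4 * Mb / η + T * (10 * ε + 2 * η * β * n)) :=
        mul_le_mul_of_nonneg_left hSb (by positivity)
    _ = 4 * Mb / (η * T) + 10 * ε + 2 * η * β * n := by field_simp; ring
    _ = 4 * Mb / (η * T) + 10 * σ / Real.sqrt m + 2 * η * β * n := by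
        rw [hε]; ring
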